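/- For every real η (including negative values), 0 ≤ 1 - (2/√π)·(exp(-η²)/(1+erf(η)))·[(1/√π)·(exp(-η²)/(1+erf(η))) + η] ≤ 1. -/

import Mathlib

open Real Set

noncomputable def erf (x : ℝ) : ℝ := (2 / Real.sqrt π) * ∫ y in (0:ℝ)..x, Real.exp (-y^2)

noncomputable def gfun (η : ℝ) : ℝ :=
  1 - (2 / Real.sqrt π) * (Real.exp (-η^2) / (1 + erf η)) *
    ((1 / Real.sqrt π) * (Real.exp (-η^2) / (1 + erf η)) + η)

open MeasureTheory Filter Topology

noncomputable def Efun (η : ℝ) : ℝ := ∫ y in Iic η, Real.exp (-y^2)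

lemma expsq_integrable : MeasureTheory.Integrable (fun y : ℝ => Real.exp (-y^2)) := by
  have := integrable_exp_neg_mul_sq (b := 1) one_pos
  simpa using this

lemma expsq_integrableOn (η : ℝ) :
    MeasureTheory.IntegrableOn (fun y : ℝ => Real.exp (-y^2)) (Iic η) :=
  expsq_integrable.integrableOn

lemma Efun_tendsto (η : ℝ) :
    Tendsto (fun a : ℝ => ∫ y in a..η, Real.exp (-y^2)) atBot (𝓝 (Efun η)) :=
  MeasureTheory.intervalIntegral_tendsto_integral_Iic η (expsq_integrableOn η) tendsto_id

lemma Efun_pos (η : ℝ) : 0 < Efun η := by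
  rw [Efun, MeasureTheory.setIntegral_pos_iff_support_of_nonneg_ae
    (Filter.Eventually.of_forall (fun y => (Real.exp_pos _).le)) (expsq_integrableOn η)]
  have hsupp : (Function.support fun y : ℝ => Real.exp (-y^2)) = univ := by
    ext y; simp [Function.mem_support, (Real.exp_pos (-y^2)).ne']
  rw [hsupp, univ_inter]
  simp [Real.volume_Iic]

/-- Upper bound on Efun for negative η. -/
lemma Efun_le (η : ℝ) (hη : η < 0) : Efun η ≤ Real.exp (-η^2) / (-2 * η) := by
  refine le_of_tendsto (Efun_tendsto η) ?_
  filter_upwards [eventually_le_atBot η] with a ha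
  have hDer : ∀ y ∈ Icc a η, HasDerivAt (fun y => Real.exp (-y^2) / (-2 * η))
      ((y / η) * Real.exp (-y^2)) y := by
    intro y _
    have h1 : HasDerivAt (fun y : ℝ => Real.exp (-y^2)) (Real.exp (-y^2) * (-2 * y)) y := by
      have h2 : HasDerivAt (fun y : ℝ => -y^2) (-(2*y)) y := by
        simpa [Pi.neg_def] using ((hasDerivAt_pow 2 y).neg)
      simpa [mul_comm, Function.comp_def] using (Real.hasDerivAt_exp (-y^2)).comp y h2
    have := h1.div_const (-2 * η)
    refine this.congr_deriv ?_
    field_simp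
  have key : ∫ y in a..η, (y / η) * Real.exp (-y^2)
      = Real.exp (-η^2) / (-2 * η) - Real.exp (-a^2) / (-2 * η) := by
    refine intervalIntegral.integral_eq_sub_of_hasDerivAt
      (f := fun y => Real.exp (-y^2) / (-2 * η)) ?_ ?_
    · intro y hy
      rw [uIcc_of_le ha] at hy
      exact hDer y hy
    · apply Continuous.intervalIntegrable
      continuity
  have hmono : ∫ y in a..η, Real.exp (-y^2) ≤ ∫ y in a..η, (y / η) * Real.exp (-y^2) := by
    apply intervalIntegral.integral_mono_on ha
    · exact (Continuous.intervalIntegrable (by continuity) _ _)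
    · exact (Continuous.intervalIntegrable (by continuity) _ _)
    · intro y hy
      have hyη : y ≤ η := hy.2
      have h1 : (1:ℝ) ≤ y / η := by
        rw [le_div_iff_of_neg hη]
        simpa using hyη
      nlinarith [Real.exp_pos (-y^2)]
  have hpos : 0 < Real.exp (-a^2) / (-2 * η) := div_pos (Real.exp_pos _) (by linarith)
  linarith [key ▸ hmono]

noncomputable def mfun (y : ℝ) : ℝ := Real.exp (-y^2) * (y + Real.sqrt (y^2 + 2)) / 2

lemma mfun_hasDeriv (y : ℝ) : HasDerivAt mfun
    (Real.exp (-y^2) * ((1 + y / Real.sqrt (y^2 + 2)) / 2 - y * (y + Real.sqrt (y^2 + 2)))) y := by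
  have hpos : (0:ℝ) < y^2 + 2 := by positivity
  have hs : Real.sqrt (y^2 + 2) ^ 2 = y^2 + 2 := Real.sq_sqrt hpos.le
  have hs0 : 0 < Real.sqrt (y^2 + 2) := Real.sqrt_pos.2 hpos
  have hexp : HasDerivAt (fun y : ℝ => Real.exp (-y^2)) (Real.exp (-y^2) * (-2 * y)) y := by
    have h2 : HasDerivAt (fun y : ℝ => -y^2) (-(2*y)) y := by
      simpa [Pi.neg_def] using ((hasDerivAt_pow 2 y).neg)
    simpa [mul_comm, Function.comp_def] using (Real.hasDerivAt_exp (-y^2)).comp y h2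
  have hsq : HasDerivAt (fun y : ℝ => Real.sqrt (y^2 + 2)) (y / Real.sqrt (y^2 + 2)) y := by
    have hin : HasDerivAt (fun y : ℝ => y^2 + 2) (2*y) y := by
      simpa using (hasDerivAt_pow 2 y).add_const 2
    have := (Real.hasDerivAt_sqrt hpos.ne').comp y hin
    refine this.congr_deriv ?_
    field_simp
  have hsum : HasDerivAt (fun y : ℝ => y + Real.sqrt (y^2 + 2))
      (1 + y / Real.sqrt (y^2 + 2)) y := (hasDerivAt_id y).add hsq
  have := (hexp.mul hsum).div_const 2
  refine this.congr_deriv ?_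
  field_simp
  ring

lemma mfun_deriv_le (y : ℝ) :
    Real.exp (-y^2) * ((1 + y / Real.sqrt (y^2 + 2)) / 2 - y * (y + Real.sqrt (y^2 + 2)))
      ≤ Real.exp (-y^2) := by
  have hpos : (0:ℝ) < y^2 + 2 := by positivity
  have hs : Real.sqrt (y^2 + 2) ^ 2 = y^2 + 2 := Real.sq_sqrt hpos.le
  have hs0 : 0 < Real.sqrt (y^2 + 2) := Real.sqrt_pos.2 hpos
  set s := Real.sqrt (y^2 + 2) with hsdef
  have key : (1 + y / s) / 2 - y * (y + s) ≤ 1 := by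
    have hrw : (1 + y / s) / 2 - y * (y + s) = ((s + y) - 2 * s * (y * (y + s))) / (2 * s) := by
      field_simp
    rw [hrw, div_le_one (by positivity)]
    have hAB : (s * (1 + 2*y^2))^2 - (y * (2*y^2 + 3))^2 = 2 := by nlinarith [hs]
    have hA : 0 < s * (1 + 2*y^2) := by positivity
    have hsum : 0 ≤ s * (1 + 2*y^2) + y * (2*y^2 + 3) := by nlinarith [hAB, hA]
    nlinarith [hs, hsum]
  nlinarith [Real.exp_pos (-y^2), key]

lemma mfun_tendsto : Tendsto mfun atBot (𝓝 0) := by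
  apply squeeze_zero' (g := fun y : ℝ => Real.exp y)
  · filter_upwards with y
    have hs : |y| ≤ Real.sqrt (y^2 + 2) := by
      rw [← Real.sqrt_sq_eq_abs]
      exact Real.sqrt_le_sqrt (by linarith)
    have : 0 ≤ y + Real.sqrt (y^2 + 2) := by
      cases le_or_gt 0 y with
      | inl h => positivity
      | inr h => rw [abs_of_neg h] at hs; linarith
    rw [mfun]
    positivity
  · filter_upwards [eventually_le_atBot (-1 : ℝ)] with y hy
    have hy2 : -y^2 ≤ y := by nlinarith
    have hs : Real.sqrt (y^2 + 2) ≤ -y + 1 := by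
      rw [show y^2 + 2 = (-y)^2 + 2 by ring]
      have : Real.sqrt ((-y)^2 + 2) ≤ Real.sqrt ((-y+1)^2) := by
        apply Real.sqrt_le_sqrt; nlinarith
      rwa [Real.sqrt_sq (by linarith)] at this
    have h1 : mfun y ≤ Real.exp (-y^2) := by
      rw [mfun]
      nlinarith [Real.exp_pos (-y^2)]
    calc mfun y ≤ Real.exp (-y^2) := h1
      _ ≤ Real.exp y := Real.exp_le_exp.2 hy2
  · exact Real.tendsto_exp_atBot

lemma mfun_le_Efun (η : ℝ) : mfun η ≤ Efun η := by
  have hlim : Tendsto (fun a : ℝ => mfun η - mfun a) atBot (𝓝 (mfun η)) := by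
    simpa using (tendsto_const_nhds (x := mfun η)).sub mfun_tendsto
  refine le_of_tendsto_of_tendsto hlim (Efun_tendsto η) ?_
  filter_upwards [eventually_le_atBot η] with a ha
  · have key : ∫ y in a..η, Real.exp (-y^2) *
        ((1 + y / Real.sqrt (y^2 + 2)) / 2 - y * (y + Real.sqrt (y^2 + 2)))
        = mfun η - mfun a := by
      apply intervalIntegral.integral_eq_sub_of_hasDerivAt
      · intro y _; exact mfun_hasDeriv y
      · apply Continuous.intervalIntegrable
        apply Continuous.mul (by continuity)
        apply Continuous.sub
        · apply Continuous.div_const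
          apply Continuous.add continuous_const
          apply Continuous.div continuous_id (by continuity)
          intro y
          exact (Real.sqrt_pos.2 (by positivity)).ne'
        · continuity
    have hmono : ∫ y in a..η, Real.exp (-y^2) *
        ((1 + y / Real.sqrt (y^2 + 2)) / 2 - y * (y + Real.sqrt (y^2 + 2)))
        ≤ ∫ y in a..η, Real.exp (-y^2) := by
      apply intervalIntegral.integral_mono_on ha
      · apply Continuous.intervalIntegrable
        apply Continuous.mul (by continuity)
        apply Continuous.sub
        · apply Continuous.div_const
          apply Continuous.add continuous_const
          apply Continuous.div continuous_id (by continuity)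
          intro y
          exact (Real.sqrt_pos.2 (by positivity)).ne'
        · continuity
      · exact Continuous.intervalIntegrable (by continuity) _ _
      · intro y _; exact mfun_deriv_le y
    linarith [key ▸ hmono]

lemma one_add_erf (η : ℝ) : 1 + erf η = 2 / Real.sqrt π * Efun η := by
  have hsplit : Efun η - Efun 0 = ∫ y in (0:ℝ)..η, Real.exp (-y^2) :=
    intervalIntegral.integral_Iic_sub_Iic (expsq_integrableOn 0) (expsq_integrableOn η)
  have hE0 : Efun 0 = Real.sqrt π / 2 := by
    have h1 : (∫ y in Iic (0:ℝ), Real.exp (-y^2)) = ∫ y in Ioi (0:ℝ), Real.exp (-y^2) := by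
      have := integral_comp_neg_Ioi (c := (0:ℝ)) (fun y => Real.exp (-y^2))
      simp only [neg_zero, neg_neg, neg_sq] at this
      exact this.symm
    have h2 : (∫ y in Ioi (0:ℝ), Real.exp (-y^2)) = Real.sqrt π / 2 := by
      have := integral_gaussian_Ioi 1
      simpa using this
    rw [Efun, h1, h2]
  have hpi : (0:ℝ) < Real.sqrt π := Real.sqrt_pos.2 Real.pi_pos
  rw [erf, ← hsplit, hE0]
  field_simp
  ring

theorem stmt_1 : ∀ η : ℝ, 0 ≤ gfun η ∧ gfun η ≤ 1 := by
  intro η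
  have hE := Efun_pos η
  have h1 := one_add_erf η
  have hpi : (0:ℝ) < Real.sqrt π := Real.sqrt_pos.2 Real.pi_pos
  set X := Real.exp (-η^2) with hXdef
  have hX : 0 < X := Real.exp_pos _
  set E := Efun η with hEdef
  set s := Real.sqrt (η^2 + 2) with hsdef
  have hs2 : s ^ 2 = η^2 + 2 := Real.sq_sqrt (by positivity)
  have hs0 : 0 < s := Real.sqrt_pos.2 (by positivity)
  have hup : X * (η + s) / 2 ≤ E := mfun_le_Efun η
  have hlow : 0 ≤ X + 2 * η * E := by
    cases le_or_gt 0 η with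
    | inl h => nlinarith
    | inr h =>
      have h2 := Efun_le η h
      rw [← hEdef, ← hXdef] at h2
      have h3 : E * (-2 * η) ≤ X := (le_div_iff₀ (by linarith : (0:ℝ) < -2 * η)).1 h2
      linarith
  have hg : gfun η = 1 - X * (X + 2 * η * E) / (2 * E^2) := by
    have hEne : E ≠ 0 := hE.ne'
    have hpine : Real.sqrt π ≠ 0 := hpi.ne'
    rw [gfun, h1, ← hXdef]
    field_simp
  have hquad : X * (X + 2 * η * E) ≤ 2 * E^2 := by
    have f1 : 0 ≤ E - X * (η + s) / 2 := by linarith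
    have f2 : 0 ≤ E - X * (η - s) / 2 := by nlinarith
    have hs2' : X^2 * s^2 = X^2 * (η^2 + 2) := by rw [hs2]
    nlinarith [mul_nonneg f1 f2, hs2']
  constructor
  · rw [hg]
    have : X * (X + 2 * η * E) / (2 * E^2) ≤ 1 := by
      rw [div_le_one (by positivity)]
      exact hquad
    linarith
  · rw [hg]
    have : 0 ≤ X * (X + 2 * η * E) / (2 * E^2) := by positivity
    linarith
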